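/- arXiv:1701.00637 — 3 statements merged into one kernel-verified Lean document; each statement's English description precedes it below -/
import Mathlib

section
/- If M₁ β-reduces to N₁ in l₁ steps and M₂ β-reduces to N₂ in l₂ steps, then M₁[x:=M₂] β-reduces to N₁[x:=N₂] in exactly l = l₁ + (number of free occurrences of x in M₁) × l₂ steps (for a suitable choice of reduction path). -/
inductive Lam : Type
  | var : ℕ → Lam
  | lam : Lam → Lam
  | app : Lam → Lam → Lam
  deriving DecidableEq

namespace Lam

/-- term size -/
def size : Lam → ℕ
  | var _ => 1
  | lam M => 1 + M.size
  | app M N => 1 + M.size + N.size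

/-- lift (shift) free variables ≥ d by 1 -/
def lift (d : ℕ) : Lam → Lam
  | var n => if n < d then var n else var (n+1)
  | lam M => lam (M.lift (d+1))
  | app M N => app (M.lift d) (N.lift d)

/-- capture-avoiding substitution of N for the free variable x (de Bruijn) -/
def subst : Lam → ℕ → Lam → Lam
  | var n, x, N => if n = x then N else if x < n then var (n-1) else var n
  | lam M, x, N => lam (M.subst (x+1) (N.lift 0))
  | app M P, x, N => app (M.subst x N) (P.subst x N)

/-- number of free occurrences of the variable x -/
def count : Lam → ℕ → ℕ
  | var n, x => if n = x then 1 else 0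
  | lam M, x => M.count (x+1)
  | app M N, x => M.count x + N.count x

/-- one-step β-reduction -/
inductive Step : Lam → Lam → Prop
  | beta (M N : Lam) : Step (app (lam M) N) (M.subst 0 N)
  | appL {M M' : Lam} (N : Lam) : Step M M' → Step (app M N) (app M' N)
  | appR (M : Lam) {N N' : Lam} : Step N N' → Step (app M N) (app M N')
  | abs {M M' : Lam} : Step M M' → Step (lam M) (lam M')

/-- many-step β-reduction (reflexive-transitive closure) -/
def Red : Lam → Lam → Prop := Relation.ReflTransGen Step

/-- n-step β-reduction -/
def Steps : ℕ → Lam → Lam → Prop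
  | 0, M, N => M = N
  | n+1, M, N => ∃ P, Step M P ∧ Steps n P N

/-- Takahashi translation (Gross-Knuth complete development) -/
def star : Lam → Lam
  | var n => var n
  | lam M => lam (star M)
  | app (lam M) N => (star M).subst 0 (star N)
  | app (var n) N => app (var n) (star N)
  | app (app M₁ M₂) N => app (star (app M₁ M₂)) (star N)

/-- iterated Takahashi translation M^(n*) -/
def iterStar (n : ℕ) (M : Lam) : Lam := star^[n] M

end Lam

namespace Lam

theorem lift_lift (M : Lam) : ∀ i j, i ≤ j →
    (M.lift j).lift i = (M.lift i).lift (j+1) := by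
  induction M with
  | var n =>
    intro i j h
    simp only [lift]
    repeat' (split_ifs <;> try simp only [lift, subst])
    all_goals first | rfl | omega | (congr 1; omega)
  | lam M ih => intro i j h; exact congrArg Lam.lam (ih (i+1) (j+1) (by omega))
  | app M N ihM ihN => intro i j h; simp only [lift, ihM i j h, ihN i j h]

theorem subst_lift (M : Lam) : ∀ x N, (M.lift x).subst x N = M := by
  induction M with
  | var n =>
    intro x N
    simp only [lift, subst]
    repeat' (split_ifs <;> try simp only [lift, subst])
    all_goals first | rfl | omega | (congr 1; omega)
  | lam M ih => intro x N; simp only [lift, subst, ih]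
  | app M P ihM ihP => intro x N; simp only [lift, subst, ihM, ihP]

theorem lift_subst_high (M : Lam) : ∀ x d N, x ≤ d →
    (M.subst x N).lift d = (M.lift (d+1)).subst x (N.lift d) := by
  induction M with
  | var n =>
    intro x d N h
    simp only [lift, subst]
    repeat' (split_ifs <;> try simp only [lift, subst])
    all_goals first | rfl | omega | (congr 1; omega)
  | lam M ih =>
    intro x d N h
    simp only [subst, lift, ih (x+1) (d+1) (N.lift 0) (by omega), lift_lift N 0 d (by omega)]
  | app M P ihM ihP => intro x d N h; simp only [subst, lift, ihM x d N h, ihP x d N h]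

theorem lift_subst_low (M : Lam) : ∀ x d N, d ≤ x →
    (M.subst x N).lift d = (M.lift d).subst (x+1) (N.lift d) := by
  induction M with
  | var n =>
    intro x d N h
    simp only [lift, subst]
    repeat' (split_ifs <;> try simp only [lift, subst])
    all_goals first | rfl | omega | (congr 1; omega)
  | lam M ih =>
    intro x d N h
    simp only [subst, lift, ih (x+1) (d+1) (N.lift 0) (by omega), lift_lift N 0 d (by omega)]
  | app M P ihM ihP => intro x d N h; simp only [subst, lift, ihM x d N h, ihP x d N h]

theorem subst_subst (M : Lam) : ∀ i x P N, i ≤ x →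
    (M.subst i P).subst x N = (M.subst (x+1) (N.lift i)).subst i (P.subst x N) := by
  induction M with
  | var n =>
    intro i x P N h
    simp only [subst]
    repeat' (split_ifs <;> try simp only [lift, subst])
    all_goals first | rfl | omega | (congr 1; omega) | (rw [subst_lift])
  | lam M ih =>
    intro i x P N h
    simp only [subst, ih (i+1) (x+1) (P.lift 0) (N.lift 0) (by omega),
      lift_lift N 0 i (by omega), lift_subst_low P x 0 N (by omega)]
  | app M Q ihM ihQ => intro i x P N h; simp only [subst, ihM i x P N h, ihQ i x P N h]

theorem step_lift {M M' : Lam} (h : Step M M') : ∀ d, Step (M.lift d) (M'.lift d) := by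
  induction h with
  | beta M N => intro d; rw [lift_subst_high M 0 d N (by omega)]; exact Step.beta _ _
  | appL N _ ih => intro d; exact Step.appL _ (ih d)
  | appR M _ ih => intro d; exact Step.appR _ (ih d)
  | abs _ ih => intro d; exact Step.abs (ih (d+1))

theorem step_subst_left {M M' : Lam} (h : Step M M') :
    ∀ x N, Step (M.subst x N) (M'.subst x N) := by
  induction h with
  | beta M P => intro x N; rw [subst_subst M 0 x P N (by omega)]; exact Step.beta _ _
  | appL N _ ih => intro x N'; exact Step.appL _ (ih x N')
  | appR M _ ih => intro x N'; exact Step.appR _ (ih x N')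
  | abs _ ih => intro x N'; exact Step.abs (ih (x+1) (N'.lift 0))

theorem steps_trans : ∀ {a b : ℕ} {M P N : Lam},
    Steps a M P → Steps b P N → Steps (a+b) M N := by
  intro a
  induction a with
  | zero => intro b M P N h₁ h₂; cases h₁; simpa using h₂
  | succ a ih =>
    intro b M P N h₁ h₂
    obtain ⟨Q, hQ, hQ'⟩ := h₁
    have e : a + 1 + b = (a + b) + 1 := by omega
    rw [e]
    exact ⟨Q, hQ, ih hQ' h₂⟩

theorem steps_map {f : Lam → Lam} (hf : ∀ {M N}, Step M N → Step (f M) (f N)) :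
    ∀ {l M N}, Steps l M N → Steps l (f M) (f N) := by
  intro l
  induction l with
  | zero => intro M N h; cases h; rfl
  | succ l ih =>
    intro M N h
    obtain ⟨P, hP, hP'⟩ := h
    exact ⟨f P, hf hP, ih hP'⟩

theorem steps_subst_right : ∀ (M : Lam) (x : ℕ) {l : ℕ} {M₂ N₂ : Lam},
    Steps l M₂ N₂ → Steps (M.count x * l) (M.subst x M₂) (M.subst x N₂) := by
  intro M
  induction M with
  | var n =>
    intro x l M₂ N₂ h
    simp only [count, subst]
    split_ifs with hn
    · simpa using h
    · simp [Steps]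
    · simp [Steps]
  | lam M ih =>
    intro x l M₂ N₂ h
    simp only [count, subst]
    exact steps_map (fun h => Step.abs h) (ih (x+1) (steps_map (fun h => step_lift h 0) h))
  | app M P ihM ihP =>
    intro x l M₂ N₂ h
    simp only [count, subst, Nat.add_mul]
    exact steps_trans (steps_map (fun h => Step.appL _ h) (ihM x h))
      (steps_map (fun h => Step.appR _ h) (ihP x h))

end Lam

/-- substitution lemma for counted reduction lengths -/
theorem steps_subst {l₁ l₂ : ℕ} {M₁ N₁ M₂ N₂ : Lam} (x : ℕ)
    (h₁ : Lam.Steps l₁ M₁ N₁) (h₂ : Lam.Steps l₂ M₂ N₂) :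
    Lam.Steps (l₁ + M₁.count x * l₂) (M₁.subst x M₂) (N₁.subst x N₂) := by
  have hright := Lam.steps_subst_right M₁ x h₂
  have hleft : Lam.Steps l₁ (M₁.subst x N₂) (N₁.subst x N₂) :=
    Lam.steps_map (fun h => Lam.step_subst_left h x N₂) h₁
  rw [Nat.add_comm]
  exact Lam.steps_trans hright hleft
end

section
/- If M β-reduces to N in one step, then |N| ≤ |M|²/8 − 1. -/
namespace Lam

lemma size_pos (M : Lam) : 1 ≤ M.size := by
  induction M with
  | var n => simp [size]
  | lam M ih => simp [size]
  | app M N ih1 ih2 => simp [size]; omega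

lemma size_lift (d : ℕ) (M : Lam) : (M.lift d).size = M.size := by
  induction M generalizing d with
  | var n => by_cases h : n < d <;> simp [lift, h, size]
  | lam M ih => simp [lift, size, ih]
  | app M N ih1 ih2 => simp [lift, size, ih1, ih2]

lemma size_subst (M : Lam) (x : ℕ) (N : Lam) :
    (M.subst x N).size + M.count x ≤ M.size + M.count x * N.size := by
  induction M generalizing x N with
  | var n =>
    rcases eq_or_ne n x with h | h
    · simp [subst, count, h, size]
    · by_cases h2 : x < n <;> simp [subst, count, h, h2, size]
  | lam M ih =>
    have := ih (x+1) (N.lift 0)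
    simp only [subst, count, size, size_lift] at *
    omega
  | app P Q ih1 ih2 =>
    have h1 := ih1 x N
    have h2 := ih2 x N
    simp only [subst, count, size] at *
    nlinarith
end Lam

lemma two_count_le (M : Lam) (x : ℕ) : 2 * M.count x ≤ M.size + 1 := by
  induction M generalizing x with
  | var n => rcases eq_or_ne n x with h | h <;> simp [Lam.count, h, Lam.size]
  | lam M ih => have := ih (x+1); simp only [Lam.count, Lam.size] at *; omega
  | app P Q ih1 ih2 =>
    have h1 := ih1 x; have h2 := ih2 x
    simp only [Lam.count, Lam.size] at *; omega

lemma step_size_ge {M N : Lam} (h : Lam.Step M N) : 4 ≤ M.size := by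
  induction h with
  | beta P Q =>
    have := P.size_pos; have := Q.size_pos
    simp only [Lam.size]; omega
  | appL Q h ih => have := Q.size_pos; simp only [Lam.size]; omega
  | appR P h ih => have := P.size_pos; simp only [Lam.size]; omega
  | abs h ih => simp only [Lam.size]; omega

lemma size_step_int {M N : Lam} (h : Lam.Step M N) :
    8 * ((N.size : ℤ) + 1) ≤ (M.size : ℤ) ^ 2 := by
  induction h with
  | beta P Q =>
    have hs := Lam.size_subst P 0 Q
    have hk := two_count_le P 0
    have hb := Q.size_pos
    have ha := P.size_pos
    simp only [Lam.size]
    set a := P.size; set b := Q.size; set k := P.count 0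
    set n := (P.subst 0 Q).size
    have hs' : (n : ℤ) + k ≤ a + k * b := by exact_mod_cast hs
    have hk' : 2 * (k : ℤ) ≤ a + 1 := by exact_mod_cast hk
    have hb' : 1 ≤ (b : ℤ) := by exact_mod_cast hb
    have ha' : 1 ≤ (a : ℤ) := by exact_mod_cast ha
    push_cast
    nlinarith [sq_nonneg ((a : ℤ) - b), mul_nonneg (sub_nonneg.2 ha') (sub_nonneg.2 hb')]
  | @appL P P' Q h ih =>
    have h4 : (4 : ℤ) ≤ P.size := by exact_mod_cast step_size_ge h
    have hq : (1 : ℤ) ≤ Q.size := by exact_mod_cast Q.size_pos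
    simp only [Lam.size]; push_cast
    nlinarith
  | @appR P Q Q' h ih =>
    have h4 : (4 : ℤ) ≤ Q.size := by exact_mod_cast step_size_ge h
    have hp : (1 : ℤ) ≤ P.size := by exact_mod_cast P.size_pos
    simp only [Lam.size]; push_cast
    nlinarith
  | @abs P P' h ih =>
    have h4 : (4 : ℤ) ≤ P.size := by exact_mod_cast step_size_ge h
    simp only [Lam.size]; push_cast
    nlinarith

/-- one-step reduction at most squares the size (divided by 8, minus 1) -/
theorem size_step {M N : Lam} (h : Lam.Step M N) :
    (N.size : ℚ) ≤ (M.size : ℚ) ^ 2 / 8 - 1 := by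
  have := size_step_int h
  have h' : 8 * ((N.size : ℚ) + 1) ≤ (M.size : ℚ) ^ 2 := by exact_mod_cast this
  linarith
end

section
/- If M β-reduces to N in n steps with n ≥ 1, then |N| < 8·(|M|/8)^(2^n). -/
namespace Lam

lemma two_count_le (M : Lam) (x : ℕ) : 2 * M.count x ≤ M.size + 1 := by
  induction M generalizing x with
  | var n => simp only [count, size]; split <;> omega
  | lam M ih => simp only [count, size]; have := ih (x+1); omega
  | app M N ihM ihN =>
      simp only [count, size]
      have h1 := ihM x; have h2 := ihN x
      have := M.size_pos; have := N.size_pos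
      omega

lemma step_size_ge {M N : Lam} (h : Step M N) : 4 ≤ M.size := by
  induction h with
  | beta M N => have := M.size_pos; have := N.size_pos; simp [size]; omega
  | appL N _ ih => have := N.size_pos; simp [size]; omega
  | appR M _ ih => have := M.size_pos; simp [size]; omega
  | abs _ ih => simp [size]; omega

lemma step_size_lt {M N : Lam} (h : Step M N) : 8 * N.size < M.size ^ 2 := by
  induction h with
  | beta M N =>
      have hs := size_subst M 0 N
      have hc := two_count_le M 0
      have hp := M.size_pos
      have hq := N.size_pos
      simp only [size]
      set p := M.size; set q := N.size; set c := M.count 0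
      set s := (M.subst 0 N).size
      -- 8s ≤ 8p + 8c(q-1) ≤ 8p + 4(p+1)(q-1) < (2+p+q)^2
      have h1 : 8 * s + 8 * c ≤ 8 * p + 8 * (c * q) := by omega
      have h2 : 2 * c * q ≤ (p + 1) * q :=
        Nat.mul_le_mul_right q hc
      nlinarith [sq_nonneg (p - q : ℤ), sq_nonneg ((p : ℤ) - q)]
  | appL N hstep ih =>
      have h4 := step_size_ge hstep
      have := N.size_pos
      simp only [size] at *
      nlinarith
  | appR M hstep ih =>
      have h4 := step_size_ge hstep
      have := M.size_pos
      simp only [size] at *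
      nlinarith
  | abs hstep ih =>
      have h4 := step_size_ge hstep
      simp only [size] at *
      nlinarith

lemma steps_bound : ∀ (n : ℕ) (M N : Lam), Steps (n+1) M N →
    (N.size : ℚ) < 8 * ((M.size : ℚ) / 8) ^ (2 ^ (n+1)) := by
  intro n
  induction n with
  | zero =>
      intro M N h
      obtain ⟨P, hMP, hPN⟩ := h
      cases hPN
      have h1 := step_size_lt hMP
      have h1' : (8 * N.size : ℚ) < (M.size : ℚ) ^ 2 := by exact_mod_cast h1
      rw [pow_one, div_pow]
      rw [show ((8:ℚ))^2 = 64 by norm_num]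
      linarith
  | succ n ih =>
      intro M N h
      obtain ⟨P, hMP, hPN⟩ := h
      have hIH := ih P N hPN
      have h1 := step_size_lt hMP
      have h1' : (8 * P.size : ℚ) < (M.size : ℚ) ^ 2 := by exact_mod_cast h1
      have hPpos : (0:ℚ) ≤ (P.size : ℚ) / 8 := by positivity
      have hP8 : (P.size : ℚ) / 8 ≤ ((M.size : ℚ) / 8) ^ 2 := by
        rw [div_pow]
        rw [show ((8:ℚ))^2 = 64 by norm_num]
        rw [div_le_div_iff₀ (by norm_num) (by norm_num)]
        linarith
      calc (N.size : ℚ) < 8 * ((P.size : ℚ) / 8) ^ (2 ^ (n+1)) := hIH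
        _ ≤ 8 * (((M.size : ℚ) / 8) ^ 2) ^ (2 ^ (n+1)) := by
            gcongr
        _ = 8 * ((M.size : ℚ) / 8) ^ (2 ^ (n+2)) := by
            rw [← pow_mul, pow_succ 2 (n+1)]
            ring_nf

end Lam

/-- size after an n-step reduction, n ≥ 1 -/
theorem size_steps {n : ℕ} {M N : Lam} (hn : 1 ≤ n) (h : Lam.Steps n M N) :
    (N.size : ℚ) < 8 * ((M.size : ℚ) / 8) ^ (2 ^ n) := by
  obtain ⟨m, rfl⟩ := Nat.exists_eq_add_of_le hn
  rw [Nat.add_comm] at h ⊢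
  exact Lam.steps_bound m M N h
end
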